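/- For all n ≥ 2, the nested designs X_n generated by the greedy-packing algorithm satisfy SR(X_n) = CR(X_{n-1})/2. -/
import Mathlib


open Metric Set MeasureTheory

/-- Distance from a point `x` to the nearest point of the design `D`. -/
noncomputable def minDist {E : Type*} [NormedAddCommGroup E] (D : Finset E) (x : E) : ℝ :=
  sInf ((fun p => dist x p) '' (D : Set E))

/-- Fill distance (covering radius) of the design `D` for the set `A`:
`CR_A(D) = sup_{x ∈ A} min_{p ∈ D} ‖x - p‖`. -/
noncomputable def fillDist {E : Type*} [NormedAddCommGroup E] (A : Set E) (D : Finset E) : ℝ :=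
  sSup ((fun x => minDist D x) '' A)

/-- Separation radius of the design `D`:
`SR(D) = (1/2) min_{p ≠ q ∈ D} ‖p - q‖`. -/
noncomputable def sepRad {E : Type*} [NormedAddCommGroup E] (D : Finset E) : ℝ :=
  (1 / 2) * sInf ((fun p : E × E => dist p.1 p.2) '' {p | p.1 ∈ D ∧ p.2 ∈ D ∧ p.1 ≠ p.2})

/-- Mesh-ratio of the design `D` for the set `A`: `MR(D) = CR_A(D) / SR(D)`. -/
noncomputable def meshRatio {E : Type*} [NormedAddCommGroup E] (A : Set E) (D : Finset E) : ℝ :=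
  fillDist A D / sepRad D

/-- The nested design consisting of the first `n` points of the sequence `x`. -/
noncomputable def design {E : Type*} (x : ℕ → E) (n : ℕ) : Finset E :=
  letI := Classical.decEq E
  (Finset.range n).image x

section Aux

variable {E : Type*} [NormedAddCommGroup E]

lemma minDist_le {D : Finset E} {x p : E} (hp : p ∈ D) : minDist D x ≤ dist x p :=
  csInf_le ((D.finite_toSet.image _).bddBelow) ⟨p, hp, rfl⟩

lemma exists_minDist {D : Finset E} (hD : D.Nonempty) (x : E) :
    ∃ p ∈ D, minDist D x = dist x p := by
  obtain ⟨q, hq⟩ := hD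
  have hne : ((fun p => dist x p) '' (D : Set E)).Nonempty := ⟨_, q, hq, rfl⟩
  obtain ⟨p, hp, hpe⟩ := hne.csInf_mem (D.finite_toSet.image _)
  exact ⟨p, hp, hpe.symm⟩

lemma minDist_anti {D D' : Finset E} (h : D ⊆ D') (hD : D.Nonempty) (x : E) :
    minDist D' x ≤ minDist D x := by
  obtain ⟨p, hp, he⟩ := exists_minDist hD x
  rw [he]; exact minDist_le (h hp)

lemma minDist_le_fillDist {S : Set E} (hb : Bornology.IsBounded S) {D : Finset E}
    {p0 : E} (hp0 : p0 ∈ D) {y : E} (hy : y ∈ S) :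
    minDist D y ≤ fillDist S D := by
  apply le_csSup
  · obtain ⟨r, hr⟩ := hb.subset_closedBall p0
    refine ⟨r, ?_⟩
    rintro _ ⟨z, hz, rfl⟩
    exact (minDist_le hp0).trans (by simpa [Metric.mem_closedBall] using hr hz)
  · exact ⟨y, hy, rfl⟩

lemma fillDist_anti {S : Set E} (hb : Bornology.IsBounded S) (hSne : S.Nonempty)
    {D D' : Finset E} (h : D ⊆ D') {p0 : E} (hp0 : p0 ∈ D) :
    fillDist S D' ≤ fillDist S D := by
  apply csSup_le (hSne.image _)
  rintro _ ⟨z, hz, rfl⟩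
  exact (minDist_anti h ⟨p0, hp0⟩ z).trans (minDist_le_fillDist hb hp0 hz)

lemma mem_design {x : ℕ → E} {n i : ℕ} (hi : i < n) : x i ∈ design x n := by
  simp only [design, Finset.mem_image, Finset.mem_range]
  exact ⟨i, hi, rfl⟩

lemma mem_design_iff {x : ℕ → E} {n : ℕ} {p : E} :
    p ∈ design x n ↔ ∃ i < n, x i = p := by
  simp [design]

lemma design_subset {x : ℕ → E} {a b : ℕ} (h : a ≤ b) : design x a ⊆ design x b := by
  intro p hp
  obtain ⟨i, hi, rfl⟩ := mem_design_iff.mp hp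
  exact mem_design (lt_of_lt_of_le hi h)

end Aux

/-- For all `n ≥ 2`, the nested designs `Xₙ` generated by the greedy-packing
algorithm (each new point `x (k)` maximizes over `S` the distance to the current design, i.e.
`min_{x_i ∈ X_k} ‖x_{k+1} − x_i‖ = CR(X_k)`) satisfy `SR(Xₙ) = CR(X_{n−1})/2`. -/
theorem statement5 {d : ℕ} (hd : 1 ≤ d)
    {E : Type*} [NormedAddCommGroup E] [NormedSpace ℝ E] [FiniteDimensional ℝ E]
    (hdim : Module.finrank ℝ E = d)
    (S : Set E) (hS : IsCompact S)
    (x : ℕ → E) (hinj : Function.Injective x) (hx0 : x 0 ∈ S)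
    (hgreedy : ∀ k : ℕ, 1 ≤ k →
      x k ∈ S ∧ minDist (design x k) (x k) = fillDist S (design x k))
    (n : ℕ) (hn : 2 ≤ n) :
    sepRad (design x n) = fillDist S (design x (n - 1)) / 2 := by
  obtain ⟨m, rfl⟩ : ∃ m, n = m + 1 := ⟨n - 1, by omega⟩
  have hm : 1 ≤ m := by omega
  simp only [Nat.add_sub_cancel]
  have hb : Bornology.IsBounded S := hS.isBounded
  have hSne : S.Nonempty := ⟨x 0, hx0⟩
  set c := fillDist S (design x m) with hc
  -- key inequality
  have key : ∀ i j : ℕ, i < j → j < m + 1 → c ≤ dist (x i) (x j) := by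
    intro i j hij hj
    have hj1 : 1 ≤ j := by omega
    have hg := (hgreedy j hj1).2
    have h1 : c ≤ fillDist S (design x j) :=
      fillDist_anti hb hSne (design_subset (by omega)) (mem_design (show 0 < j by omega))
    have h2 : minDist (design x j) (x j) ≤ dist (x j) (x i) := minDist_le (mem_design hij)
    rw [hg] at h2
    calc c ≤ fillDist S (design x j) := h1
    _ ≤ dist (x j) (x i) := h2
    _ = dist (x i) (x j) := dist_comm _ _
  set P := ((fun p : E × E => dist p.1 p.2) ''
    {p | p.1 ∈ design x (m + 1) ∧ p.2 ∈ design x (m + 1) ∧ p.1 ≠ p.2}) with hP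
  have hlb : ∀ a ∈ P, c ≤ a := by
    rintro _ ⟨⟨p, q⟩, ⟨hp, hq, hpq⟩, rfl⟩
    obtain ⟨i, hi, rfl⟩ := mem_design_iff.mp hp
    obtain ⟨j, hj, rfl⟩ := mem_design_iff.mp hq
    have hij : i ≠ j := fun h => hpq (by rw [h])
    rcases hij.lt_or_gt with h | h
    · exact key i j h hj
    · show c ≤ dist (x i) (x j); rw [dist_comm]; exact key j i h hi
  have hmem : c ∈ P := by
    have hg := (hgreedy m hm).2
    obtain ⟨p, hp, hpe⟩ := exists_minDist ⟨x 0, mem_design (show 0 < m by omega)⟩ (x m)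
    obtain ⟨i, hi, rfl⟩ := mem_design_iff.mp hp
    refine ⟨(x m, x i), ⟨mem_design (by omega), mem_design (by omega), ?_⟩, ?_⟩
    · intro h
      exact absurd (hinj h) (by omega)
    · simp only
      rw [← hpe, hg]
  have hinf : sInf P = c := le_antisymm (csInf_le ⟨c, hlb⟩ hmem) (le_csInf ⟨c, hmem⟩ hlb)
  rw [sepRad, ← hP, hinf]
  ring
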